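/- Let G be a finite group and H ≤ G. Define ψ(H) := ∑_{K ∈ [H,G]} μ(K,G)·|K| where μ is the Möbius function of the interval [H,G]. If t is the meet of all coatoms of [H,G] (the intersection of all maximal subgroups of G containing H), then ∑_{K ∈ [H,G]} μ(K,G)·|K:H| = |t:H| · ∑_{K ∈ [t,G]} μ(K,G)·|K:t|. -/

import Mathlib

open scoped Classical

lemma key16 {G : Type*} [Group G] [Fintype G]
    (μ : Subgroup G → Subgroup G → ℤ)
    (hμ_lt : ∀ K K' : Subgroup G, K < K' →
      μ K K' = -∑ L ∈ Finset.univ.filter (fun L : Subgroup G => K < L ∧ L ≤ K'), μ L K')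
    (K : Subgroup G) (h : ¬ sInf {M : Subgroup G | K ≤ M ∧ IsCoatom M} ≤ K) :
    μ K ⊤ = 0 := by
  induction K using WellFoundedGT.induction with
  | _ K ih =>
  set c : Subgroup G := sInf {M : Subgroup G | K ≤ M ∧ IsCoatom M} with hc
  -- K ≠ ⊤ (else the coatom set is empty and c = ⊤ ≤ K)
  have hKtop : K < ⊤ := by
    rcases lt_or_eq_of_le (le_top (a := K)) with h' | h'
    · exact h'
    · exfalso; apply h
      have : {M : Subgroup G | K ≤ M ∧ IsCoatom M} = ∅ := by
        ext M; simp only [Set.mem_setOf_eq, Set.mem_empty_iff_false, iff_false]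
        rintro ⟨hle, hco⟩
        exact hco.1 (top_le_iff.mp (h' ▸ hle))
      rw [hc, this, sInf_empty, h']
  have hKc : K ≤ c := le_sInf fun M hM => hM.1
  -- there is a coatom above K
  obtain ⟨M, hMco, hKM⟩ := (eq_top_or_exists_le_coatom K).resolve_left (ne_of_lt hKtop)
  have hcM : c ≤ M := sInf_le ⟨hKM, hMco⟩
  have hctop : c < ⊤ := lt_of_le_of_lt hcM (lt_top_iff_ne_top.mpr hMco.1)
  -- IH consequence: if K < L and μ L ⊤ ≠ 0 then c ≤ L
  have hzero : ∀ L : Subgroup G, K < L → ¬ c ≤ L → μ L ⊤ = 0 := by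
    intro L hKL hcL
    refine ih L hKL ?_
    intro hcontra
    apply hcL
    refine le_trans (sInf_le_sInf ?_) hcontra
    intro M hM
    exact ⟨le_trans hKL.le hM.1, hM.2⟩
  rw [hμ_lt K ⊤ hKtop]
  have hsub : (Finset.univ.filter (fun L : Subgroup G => c ≤ L)) ⊆
      (Finset.univ.filter (fun L : Subgroup G => K < L ∧ L ≤ ⊤)) := by
    intro L hL
    simp only [Finset.mem_filter, Finset.mem_univ, true_and] at hL ⊢
    refine ⟨lt_of_le_of_ne (le_trans hKc hL) ?_, le_top⟩
    rintro rfl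
    exact h hL
  have hs : ∑ L ∈ Finset.univ.filter (fun L : Subgroup G => K < L ∧ L ≤ ⊤), μ L ⊤
      = ∑ L ∈ Finset.univ.filter (fun L : Subgroup G => c ≤ L), μ L ⊤ := by
    refine (Finset.sum_subset hsub ?_).symm
    intro L hL hL'
    simp only [Finset.mem_filter, Finset.mem_univ, true_and] at hL hL'
    exact hzero L hL.1 hL'
  rw [hs]
  have hins : (Finset.univ.filter (fun L : Subgroup G => c ≤ L)) =
      insert c (Finset.univ.filter (fun L : Subgroup G => c < L ∧ L ≤ ⊤)) := by
    ext L
    simp only [Finset.mem_filter, Finset.mem_univ, true_and, Finset.mem_insert, le_top,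
      and_true]
    constructor
    · intro h'
      rcases eq_or_lt_of_le h' with h'' | h''
      · exact Or.inl h''.symm
      · exact Or.inr h''
    · rintro (rfl | h')
      · exact le_refl _
      · exact h'.le
  rw [hins, Finset.sum_insert (by simp)]
  have h2 := hμ_lt c ⊤ hctop
  rw [h2]; ring

open scoped Classical in
/-- For finite groups `H ≤ G`, if `t` is the intersection of all maximal
subgroups of `G` containing `H` (the meet of the coatoms of `[H,G]`), then
`∑_{K ∈ [H,G]} μ(K,G)·|K:H| = |t:H| · ∑_{K ∈ [t,G]} μ(K,G)·|K:t|`. -/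
theorem stmt16 {G : Type*} [Group G] [Fintype G] (H : Subgroup G)
    (μ : Subgroup G → Subgroup G → ℤ)
    (hμ_self : ∀ K : Subgroup G, μ K K = 1)
    (hμ_lt : ∀ K K' : Subgroup G, K < K' →
      μ K K' = -∑ L ∈ Finset.univ.filter (fun L : Subgroup G => K < L ∧ L ≤ K'), μ L K') :
    (∑ K ∈ Finset.univ.filter (fun K : Subgroup G => H ≤ K),
        μ K ⊤ * (H.relIndex K : ℤ)) =
      (H.relIndex (sInf {M : Subgroup G | H ≤ M ∧ IsCoatom M}) : ℤ) *
        ∑ K ∈ Finset.univ.filter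
            (fun K : Subgroup G => sInf {M : Subgroup G | H ≤ M ∧ IsCoatom M} ≤ K),
          μ K ⊤ * ((sInf {M : Subgroup G | H ≤ M ∧ IsCoatom M}).relIndex K : ℤ) := by
  set t : Subgroup G := sInf {M : Subgroup G | H ≤ M ∧ IsCoatom M} with ht
  have hHt : H ≤ t := le_sInf fun M hM => hM.1
  have hvanish : ∀ K : Subgroup G, H ≤ K → ¬ t ≤ K → μ K ⊤ = 0 := by
    intro K hHK htK
    refine key16 μ hμ_lt K ?_
    intro hcontra
    apply htK
    refine le_trans (sInf_le_sInf ?_) hcontra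
    intro M hM
    exact ⟨hHK.trans hM.1, hM.2⟩
  have hsub : (Finset.univ.filter (fun K : Subgroup G => t ≤ K)) ⊆
      (Finset.univ.filter (fun K : Subgroup G => H ≤ K)) := by
    intro K hK
    simp only [Finset.mem_filter, Finset.mem_univ, true_and] at hK ⊢
    exact hHt.trans hK
  have h1 : (∑ K ∈ Finset.univ.filter (fun K : Subgroup G => H ≤ K),
        μ K ⊤ * (H.relIndex K : ℤ)) =
      ∑ K ∈ Finset.univ.filter (fun K : Subgroup G => t ≤ K),
        μ K ⊤ * (H.relIndex K : ℤ) := by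
    refine (Finset.sum_subset hsub ?_).symm
    intro K hK hK'
    simp only [Finset.mem_filter, Finset.mem_univ, true_and] at hK hK'
    rw [hvanish K hK hK', zero_mul]
  rw [h1, Finset.mul_sum]
  refine Finset.sum_congr rfl ?_
  intro K hK
  simp only [Finset.mem_filter, Finset.mem_univ, true_and] at hK
  have := Subgroup.relIndex_mul_relIndex (H := H) (K := t) (L := K) hHt hK
  rw [← this]
  push_cast
  ring
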